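/- Let f : ℝ^n → ℝ be convex, differentiable with L-Lipschitz gradient, g : ℝ^n → ℝ convex, F = f + g. Fix x, y ∈ ℝ^n, t > 0, p = prox_{tg}(x - t∇f(y)). Then for any z ∈ ℝ^n: F(z) - F(p) ≥ (1/(2t))(‖x - p‖² + ‖z - p‖² - ‖x - z‖²) - (L/2)‖p - y‖². -/

import Mathlib

open scoped RealInnerProductSpace
open Filter Topology

variable {E : Type*} [NormedAddCommGroup E] [InnerProductSpace ℝ E] [CompleteSpace E]

-- derivative along a line
lemma line_hasDerivAt {f : E → ℝ} {f' : E → E} (hf : ∀ x, HasGradientAt f (f' x) x)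
    (y v : E) (s : ℝ) :
    HasDerivAt (fun s : ℝ => f (y + s • v)) ⟪f' (y + s • v), v⟫ s := by
  have hc : HasDerivAt (fun s : ℝ => y + s • v) v s := by
    simpa using ((hasDerivAt_id s).smul_const v).const_add y
  have hfd : HasFDerivAt f (InnerProductSpace.toDual ℝ E (f' (y + s • v))) (y + s • v) :=
    (hasGradientAt_iff_hasFDerivAt).1 (hf _)
  have := hfd.comp_hasDerivAt s hc
  exact this.congr_deriv (by simp)

-- convex gradient inequality
lemma grad_ineq {f : E → ℝ} {f' : E → E} (hfconv : ConvexOn ℝ Set.univ f)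
    (hf : ∀ x, HasGradientAt f (f' x) x) (y z : E) :
    f y + ⟪f' y, z - y⟫ ≤ f z := by
  have hd : HasDerivAt (fun s : ℝ => f (y + s • (z - y))) ⟪f' y, z - y⟫ 0 := by
    have := line_hasDerivAt hf y (z - y) 0
    simpa using this
  have hslope : Tendsto (slope (fun s : ℝ => f (y + s • (z - y))) 0) (𝓝[≠] 0)
      (𝓝 ⟪f' y, z - y⟫) := hasDerivAt_iff_tendsto_slope.1 hd
  have hslope' : Tendsto (slope (fun s : ℝ => f (y + s • (z - y))) 0) (𝓝[>] 0)
      (𝓝 ⟪f' y, z - y⟫) := hslope.mono_left (nhdsWithin_mono _ (fun s hs => ne_of_gt hs))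
  have hev : ∀ᶠ s in 𝓝[>] (0:ℝ), slope (fun s : ℝ => f (y + s • (z - y))) 0 s ≤ f z - f y := by
    filter_upwards [Ioo_mem_nhdsGT_of_mem (by norm_num : (0:ℝ) ∈ Set.Ico 0 1)] with s hs
    rcases hs with ⟨hs0, hs1⟩
    have hcvx := hfconv.2 (Set.mem_univ y) (Set.mem_univ z) (by linarith : (0:ℝ) ≤ 1 - s)
      (le_of_lt hs0) (by ring)
    have hpt : (1 - s) • y + s • z = y + s • (z - y) := by
      module
    rw [hpt] at hcvx
    simp only [smul_eq_mul] at hcvx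
    rw [slope_def_field]
    have h0 : (fun s : ℝ => f (y + s • (z - y))) 0 = f y := by simp
    rw [sub_zero, div_le_iff₀ hs0]
    simp only [h0]
    nlinarith
  have := le_of_tendsto hslope' hev
  linarith

-- descent lemma
lemma descent {L : ℝ} (hL : 0 ≤ L) {f : E → ℝ} {f' : E → E}
    (hf : ∀ x, HasGradientAt f (f' x) x)
    (hlip : ∀ x y, ‖f' x - f' y‖ ≤ L * ‖x - y‖) (y p : E) :
    f p ≤ f y + ⟪f' y, p - y⟫ + L / 2 * ‖p - y‖ ^ 2 := by
  set v := p - y with hv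
  set φ : ℝ → ℝ := fun s => f (y + s • v) with hφ
  have hd : ∀ s ∈ Set.uIcc (0:ℝ) 1, HasDerivAt φ ⟪f' (y + s • v), v⟫ s :=
    fun s _ => line_hasDerivAt hf y v s
  have hf'cont : Continuous f' := by
    have : LipschitzWith (Real.toNNReal L) f' := by
      apply LipschitzWith.of_dist_le_mul
      intro a b
      rw [dist_eq_norm, dist_eq_norm]
      calc ‖f' a - f' b‖ ≤ L * ‖a - b‖ := hlip a b
        _ ≤ Real.toNNReal L * ‖a - b‖ := by
            gcongr; exact (Real.le_coe_toNNReal L)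
    exact this.continuous
  have hcont : Continuous fun s : ℝ => ⟪f' (y + s • v), v⟫ := by
    apply Continuous.inner
    · exact hf'cont.comp (by continuity)
    · exact continuous_const
  have hint : IntervalIntegrable (fun s : ℝ => ⟪f' (y + s • v), v⟫)
      MeasureTheory.volume 0 1 := hcont.intervalIntegrable 0 1
  have heq : ∫ s in (0:ℝ)..1, ⟪f' (y + s • v), v⟫ = φ 1 - φ 0 :=
    intervalIntegral.integral_eq_sub_of_hasDerivAt hd hint
  have hφ1 : φ 1 = f p := by simp [hφ, hv]
  have hφ0 : φ 0 = f y := by simp [hφ]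
  have hbound : ∫ s in (0:ℝ)..1, ⟪f' (y + s • v), v⟫
      ≤ ∫ s in (0:ℝ)..1, (⟪f' y, v⟫ + L * s * ‖v‖ ^ 2) := by
    apply intervalIntegral.integral_mono_on (by norm_num) hint
    · exact ((continuous_const.add ((continuous_const.mul continuous_id).mul
        continuous_const)).intervalIntegrable 0 1)
    · intro s hs
      have h1 : ⟪f' (y + s • v), v⟫ - ⟪f' y, v⟫ = ⟪f' (y + s • v) - f' y, v⟫ := by
        rw [inner_sub_left]
      have h2 : ⟪f' (y + s • v) - f' y, v⟫ ≤ ‖f' (y + s • v) - f' y‖ * ‖v‖ :=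
        real_inner_le_norm _ _
      have h3 : ‖f' (y + s • v) - f' y‖ ≤ L * ‖(y + s • v) - y‖ := hlip _ _
      have h4 : ‖(y + s • v) - y‖ = s * ‖v‖ := by
        rw [add_sub_cancel_left, norm_smul, Real.norm_eq_abs, abs_of_nonneg hs.1]
      have h5 : ‖f' (y + s • v) - f' y‖ * ‖v‖ ≤ L * s * ‖v‖ ^ 2 := by
        calc ‖f' (y + s • v) - f' y‖ * ‖v‖ ≤ (L * (s * ‖v‖)) * ‖v‖ := by
              apply mul_le_mul_of_nonneg_right _ (norm_nonneg v)
              rw [← h4]; exact h3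
          _ = L * s * ‖v‖ ^ 2 := by ring
      linarith
  have hval : ∫ s in (0:ℝ)..1, (⟪f' y, v⟫ + L * s * ‖v‖ ^ 2)
      = ⟪f' y, v⟫ + L / 2 * ‖v‖ ^ 2 := by
    have hrw : (fun s : ℝ => ⟪f' y, v⟫ + L * s * ‖v‖ ^ 2)
        = fun s : ℝ => ⟪f' y, v⟫ + (L * ‖v‖ ^ 2) * s := by ext s; ring
    have hi1 : IntervalIntegrable (fun _ : ℝ => ⟪f' y, v⟫) MeasureTheory.volume 0 1 :=
      continuous_const.intervalIntegrable 0 1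
    have hi2 : IntervalIntegrable (fun s : ℝ => (L * ‖v‖ ^ 2) * s) MeasureTheory.volume 0 1 := by
      exact (continuous_const.mul continuous_id).intervalIntegrable 0 1
    rw [hrw, intervalIntegral.integral_add hi1 hi2,
      intervalIntegral.integral_const_mul, integral_id]
    simp; ring
  rw [heq, hφ1, hφ0] at hbound
  rw [hval] at hbound
  linarith

set_option maxHeartbeats 1000000 in
theorem key_lemma_convex (n : ℕ) (L : ℝ) (hL : 0 < L)
    (f : EuclideanSpace ℝ (Fin n) → ℝ) (f' : EuclideanSpace ℝ (Fin n) → EuclideanSpace ℝ (Fin n))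
    (hfconv : ConvexOn ℝ Set.univ f)
    (hf : ∀ x, HasGradientAt f (f' x) x)
    (hlip : ∀ x y, ‖f' x - f' y‖ ≤ L * ‖x - y‖)
    (g : EuclideanSpace ℝ (Fin n) → ℝ) (hg : ConvexOn ℝ Set.univ g)
    (x y : EuclideanSpace ℝ (Fin n)) (t : ℝ) (ht : 0 < t)
    (p : EuclideanSpace ℝ (Fin n))
    (hp : ∀ w, g p + ‖p - (x - t • f' y)‖ ^ 2 / (2 * t) ≤ g w + ‖w - (x - t • f' y)‖ ^ 2 / (2 * t))
    (z : EuclideanSpace ℝ (Fin n)) :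
    (f z + g z) - (f p + g p) ≥ (1 / (2 * t)) * (‖x - p‖ ^ 2 + ‖z - p‖ ^ 2 - ‖x - z‖ ^ 2)
      - (L / 2) * ‖p - y‖ ^ 2 := by
  set u : EuclideanSpace ℝ (Fin n) := x - t • f' y with hu
  set d : EuclideanSpace ℝ (Fin n) := z - p with hd
  set C : ℝ := ⟪p - u, d⟫ with hC
  -- prox inequality
  have hprox : 0 ≤ 2 * t * (g z - g p) + 2 * C := by
    have key : ∀ s ∈ Set.Ioo (0:ℝ) 1, 0 ≤ 2 * t * (g z - g p) + 2 * C + s * ‖d‖ ^ 2 := by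
      intro s hs
      have h1 := hp (p + s • d)
      have hcvx := hg.2 (Set.mem_univ p) (Set.mem_univ z)
        (by linarith [hs.1, hs.2] : (0:ℝ) ≤ 1 - s) (le_of_lt hs.1) (by ring)
      have hpt : (1 - s) • p + s • z = p + s • d := by rw [hd]; module
      rw [hpt] at hcvx
      simp only [smul_eq_mul] at hcvx
      have hexp : ‖p + s • d - u‖ ^ 2 = ‖p - u‖ ^ 2 + 2 * (s * C) + s ^ 2 * ‖d‖ ^ 2 := by
        have : p + s • d - u = (p - u) + s • d := by abel
        rw [this, norm_add_sq_real, real_inner_smul_right, norm_smul, Real.norm_eq_abs,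
          abs_of_nonneg (le_of_lt hs.1), hC, mul_pow]
      rw [hexp] at h1
      have h2t : (0:ℝ) < 2 * t := by linarith
      have h2 : g p * (2 * t) + ‖p - u‖ ^ 2 ≤
          ((1 - s) * g p + s * g z) * (2 * t) + (‖p - u‖ ^ 2 + 2 * (s * C) + s ^ 2 * ‖d‖ ^ 2) := by
        have h3 : g p + ‖p - u‖ ^ 2 / (2 * t) ≤
            ((1 - s) * g p + s * g z) + (‖p - u‖ ^ 2 + 2 * (s * C) + s ^ 2 * ‖d‖ ^ 2) / (2 * t) :=
          le_trans h1 (by linarith)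
        calc g p * (2 * t) + ‖p - u‖ ^ 2
            = (g p + ‖p - u‖ ^ 2 / (2 * t)) * (2 * t) := by field_simp
          _ ≤ (((1 - s) * g p + s * g z) + (‖p - u‖ ^ 2 + 2 * (s * C) + s ^ 2 * ‖d‖ ^ 2) / (2 * t)) * (2 * t) :=
              mul_le_mul_of_nonneg_right h3 (le_of_lt h2t)
          _ = ((1 - s) * g p + s * g z) * (2 * t) + (‖p - u‖ ^ 2 + 2 * (s * C) + s ^ 2 * ‖d‖ ^ 2) := by
              field_simp
      -- from h2 : 0 ≤ s * (2*t*(g z - g p) + 2*C + s*‖d‖^2)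
      have h4 : 0 ≤ s * (2 * t * (g z - g p) + 2 * C + s * ‖d‖ ^ 2) := by nlinarith
      nlinarith [hs.1]
    have htend : Filter.Tendsto (fun s : ℝ => 2 * t * (g z - g p) + 2 * C + s * ‖d‖ ^ 2)
        (nhdsWithin 0 (Set.Ioi 0)) (nhds (2 * t * (g z - g p) + 2 * C)) := by
      have : Filter.Tendsto (fun s : ℝ => 2 * t * (g z - g p) + 2 * C + s * ‖d‖ ^ 2)
          (nhds 0) (nhds (2 * t * (g z - g p) + 2 * C + 0 * ‖d‖ ^ 2)) :=
        (Continuous.tendsto (by continuity) 0)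
      simpa using this.mono_left nhdsWithin_le_nhds
    refine ge_of_tendsto htend ?_
    filter_upwards [Ioo_mem_nhdsGT_of_mem (by norm_num : (0:ℝ) ∈ Set.Ico 0 1)] with s hs
    exact key s hs
  -- gradient inequality and descent
  have hgrad : f y + ⟪f' y, z - y⟫ ≤ f z := grad_ineq hfconv hf y z
  have hdesc : f p ≤ f y + ⟪f' y, p - y⟫ + L / 2 * ‖p - y‖ ^ 2 :=
    descent (le_of_lt hL) hf hlip y p
  have hinner1 : ⟪f' y, z - y⟫ - ⟪f' y, p - y⟫ = ⟪f' y, d⟫ := by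
    rw [hd, ← inner_sub_right]
    congr 1
    abel
  -- C = t * ⟪f' y, d⟫ - ⟪x - p, d⟫
  have hCval : C = t * ⟪f' y, d⟫ - ⟪x - p, d⟫ := by
    rw [hC, hu]
    have : p - (x - t • f' y) = t • f' y - (x - p) := by abel
    rw [this, inner_sub_left, real_inner_smul_left]
  -- polarization
  have hpol : ‖x - p‖ ^ 2 + ‖z - p‖ ^ 2 - ‖x - z‖ ^ 2 = 2 * ⟪x - p, d⟫ := by
    have hxz : x - z = (x - p) - d := by rw [hd]; abel
    have e := norm_sub_sq_real (x - p) d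
    have h2 : ‖z - p‖ = ‖d‖ := rfl
    rw [hxz, h2]
    linarith
  have hfz : f z - f p ≥ ⟪f' y, d⟫ - L / 2 * ‖p - y‖ ^ 2 := by
    have := hinner1
    linarith
  -- final combination
  rw [ge_iff_le, hpol]
  have h2t : (0:ℝ) < 2 * t := by linarith
  have hdiv : 1 / (2 * t) * (2 * ⟪x - p, d⟫) = ⟪x - p, d⟫ / t := by
    field_simp
  rw [hdiv, sub_le_iff_le_add, div_le_iff₀ ht]
  have h5 : t * (⟪f' y, d⟫ - L / 2 * ‖p - y‖ ^ 2) ≤ t * (f z - f p) :=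
    mul_le_mul_of_nonneg_left hfz (le_of_lt ht)
  nlinarith [hprox, h5, hCval]
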